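/- Let g : ℝ^p → ℝ be convex, non-negative, differentiable and L-smooth. Then for all w, w' ∈ ℝ^p, |g(w) - g(w')| ≤ (√(2Lg(w)) + √(2Lg(w')))·‖w - w'‖. -/

import Mathlib

open RealInnerProductSpace

lemma subgrad_ineq {p : ℕ} (g : EuclideanSpace ℝ (Fin p) → ℝ)
    (hconv : ConvexOn ℝ Set.univ g) (hdiff : Differentiable ℝ g)
    (w w' : EuclideanSpace ℝ (Fin p)) :
    ⟪gradient g w, w' - w⟫ ≤ g w' - g w := by
  set v := w' - w with hv
  have hgrad := (hdiff w).hasGradientAt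
  have hline : HasDerivAt (fun t : ℝ => w + t • v) v 0 := by
    simpa using ((hasDerivAt_id (0:ℝ)).smul_const v).const_add w
  have hgrad' : HasFDerivAt g ((InnerProductSpace.toDual ℝ _) (gradient g w))
      ((fun t : ℝ => w + t • v) 0) := by simpa using hgrad.hasFDerivAt
  have hd : HasDerivAt (fun t : ℝ => g (w + t • v)) ⟪gradient g w, v⟫ 0 := by
    have := (hgrad'.comp 0 hline.hasFDerivAt).hasDerivAt
    simpa [Function.comp_def] using this
  have hslope : Filter.Tendsto (slope (fun t : ℝ => g (w + t • v)) 0)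
      (nhdsWithin 0 (Set.Ioi 0)) (nhds ⟪gradient g w, v⟫) :=
    (hasDerivAt_iff_tendsto_slope.mp hd).mono_left
      (nhdsWithin_mono _ (fun x hx => ne_of_gt hx))
  refine le_of_tendsto hslope ?_
  filter_upwards [self_mem_nhdsWithin, Ioo_mem_nhdsGT_of_mem (by simp : (0:ℝ) ∈ Set.Ico 0 1)]
    with t ht ht1
  have ht0 : (0:ℝ) < t := ht
  have ht1' : t ≤ 1 := le_of_lt ht1.2
  have hc : g ((1 - t) • w + t • w') ≤ (1 - t) * g w + t * g w' :=
    hconv.2 (Set.mem_univ w) (Set.mem_univ w') (by linarith) (le_of_lt ht0)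
      (by ring : (1 - t) + t = 1)
  have hrw : w + t • v = (1 - t) • w + t • w' := by
    rw [hv]; module
  rw [slope_def_field, hrw]
  simp only [zero_smul, add_zero, sub_zero]
  rw [div_le_iff₀ ht0]
  calc g ((1 - t) • w + t • w') - g w
      ≤ (1 - t) * g w + t * g w' - g w := by linarith
    _ = (g w' - g w) * t := by ring

theorem convex_smooth_value_diff_bound {p : ℕ} (L : ℝ) (hL : 0 < L)
    (g : EuclideanSpace ℝ (Fin p) → ℝ)
    (hconv : ConvexOn ℝ Set.univ g) (hg0 : ∀ w, 0 ≤ g w) (hdiff : Differentiable ℝ g)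
    (hsmooth : ∀ w w', |g w - g w' - ⟪gradient g w, w - w'⟫| ≤ L / 2 * ‖w - w'‖ ^ 2) :
    ∀ w w', |g w - g w'| ≤
      (Real.sqrt (2 * L * g w) + Real.sqrt (2 * L * g w')) * ‖w - w'‖ := by
  have hgradbd : ∀ w, ‖gradient g w‖ ≤ Real.sqrt (2 * L * g w) := by
    intro w
    set u := gradient g w with hu
    set w' := w - L⁻¹ • u with hw'
    have hdiffv : w - w' = L⁻¹ • u := by rw [hw']; module
    have h1 := (abs_le.mp (hsmooth w w')).1
    have hinner : ⟪u, w - w'⟫ = L⁻¹ * ‖u‖ ^ 2 := by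
      rw [hdiffv, real_inner_smul_right, real_inner_self_eq_norm_sq]
    have hnorm : ‖w - w'‖ ^ 2 = L⁻¹ ^ 2 * ‖u‖ ^ 2 := by
      rw [hdiffv, norm_smul]
      simp [mul_pow, abs_of_pos (inv_pos.mpr hL)]
    have key : ‖u‖ ^ 2 ≤ 2 * L * g w := by
      have h2 : g w - g w' ≥ L⁻¹ * ‖u‖ ^ 2 - L / 2 * (L⁻¹ ^ 2 * ‖u‖ ^ 2) := by
        rw [← hinner, ← hnorm]; linarith
      have h3 : L⁻¹ * ‖u‖ ^ 2 - L / 2 * (L⁻¹ ^ 2 * ‖u‖ ^ 2) = ‖u‖ ^ 2 / (2 * L) := by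
        field_simp; ring
      have h4 : ‖u‖ ^ 2 / (2 * L) ≤ g w := by
        have := hg0 w'; linarith [h3 ▸ h2]
      rw [div_le_iff₀ (by positivity)] at h4
      linarith
    exact (Real.le_sqrt (norm_nonneg u) (by nlinarith [sq_nonneg ‖u‖, hg0 w])).mpr key
  intro w w'
  have key : ∀ a b : EuclideanSpace ℝ (Fin p),
      g a - g b ≤ Real.sqrt (2 * L * g a) * ‖a - b‖ := by
    intro a b
    have h1 := subgrad_ineq g hconv hdiff a b
    have h2 : ⟪gradient g a, b - a⟫ ≥ -(‖gradient g a‖ * ‖b - a‖) := by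
      have := abs_real_inner_le_norm (gradient g a) (b - a)
      have := neg_abs_le ⟪gradient g a, b - a⟫
      linarith
    have h3 : g a - g b ≤ ‖gradient g a‖ * ‖b - a‖ := by linarith
    calc g a - g b ≤ ‖gradient g a‖ * ‖b - a‖ := h3
      _ ≤ Real.sqrt (2 * L * g a) * ‖a - b‖ := by
          rw [norm_sub_rev b a]
          exact mul_le_mul_of_nonneg_right (hgradbd a) (norm_nonneg _)
  rw [abs_sub_le_iff]
  have s1 : (0:ℝ) ≤ Real.sqrt (2 * L * g w) := Real.sqrt_nonneg _
  have s2 : (0:ℝ) ≤ Real.sqrt (2 * L * g w') := Real.sqrt_nonneg _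
  have n : (0:ℝ) ≤ ‖w - w'‖ := norm_nonneg _
  constructor
  · calc g w - g w' ≤ Real.sqrt (2 * L * g w) * ‖w - w'‖ := key w w'
      _ ≤ _ := by nlinarith
  · calc g w' - g w ≤ Real.sqrt (2 * L * g w') * ‖w' - w‖ := key w' w
      _ = Real.sqrt (2 * L * g w') * ‖w - w'‖ := by rw [norm_sub_rev]
      _ ≤ _ := by nlinarith
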